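/- For 0 < q < 1, the entire function E_q^x = ∑_{n=0}^∞ q^{n(n-1)/2} x^n/[n]! equals the infinite product ∏_{j=0}^∞ (1 + q^j(1-q)x) for all real x, where [n]! = ∏_{k=1}^n (1-q^k)/(1-q). -/

import Mathlib

open Finset Filter

noncomputable def qfac (q : ℝ) (n : ℕ) : ℝ := ∏ k ∈ Finset.range n, ((1 - q ^ (k + 1)) / (1 - q))
noncomputable def qa (q : ℝ) (n : ℕ) : ℝ := q ^ (n * (n - 1) / 2) / qfac q n
noncomputable def qS (q x : ℝ) : ℝ := ∑' n : ℕ, qa q n * x ^ n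

lemma tri (n : ℕ) : (n + 1) * n / 2 = n * (n - 1) / 2 + n := by
  have h1 := Nat.choose_two_right n
  have h2 := Nat.choose_two_right (n + 1)
  have h3 : (n + 1).choose 2 = n.choose 1 + n.choose 2 := Nat.choose_succ_succ n 1
  simp [Nat.choose_one_right] at h3
  simp at h2
  omega

lemma one_le_qfac {q : ℝ} (hq0 : 0 < q) (hq1 : q < 1) (n : ℕ) : 1 ≤ qfac q n := by
  rw [qfac]
  calc (1:ℝ) = ∏ _k ∈ Finset.range n, 1 := by simp
    _ ≤ ∏ k ∈ Finset.range n, ((1 - q ^ (k + 1)) / (1 - q)) := by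
        apply Finset.prod_le_prod (fun _ _ => zero_le_one)
        intro k _
        have h : q ^ (k + 1) ≤ q ^ 1 := pow_le_pow_of_le_one hq0.le hq1.le (by omega)
        rw [pow_one] at h
        rw [le_div_iff₀ (by linarith)]
        linarith

lemma qa_nonneg {q : ℝ} (hq0 : 0 < q) (hq1 : q < 1) (n : ℕ) : 0 ≤ qa q n :=
  div_nonneg (pow_nonneg hq0.le _) (by linarith [one_le_qfac hq0 hq1 n])

lemma qa_le_one {q : ℝ} (hq0 : 0 < q) (hq1 : q < 1) (n : ℕ) : qa q n ≤ 1 := by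
  rw [qa, div_le_one (by linarith [one_le_qfac hq0 hq1 n])]
  calc q ^ (n * (n - 1) / 2) ≤ 1 := pow_le_one₀ hq0.le hq1.le
    _ ≤ qfac q n := one_le_qfac hq0 hq1 n

lemma qa_succ {q : ℝ} (hq0 : 0 < q) (hq1 : q < 1) (n : ℕ) :
    qa q (n + 1) * (1 - q ^ (n + 1)) = qa q n * q ^ n * (1 - q) := by
  have hf : qfac q (n + 1) = qfac q n * ((1 - q ^ (n + 1)) / (1 - q)) :=
    Finset.prod_range_succ _ n
  have h1 : (0:ℝ) < 1 - q := by linarith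
  have h2 : (0:ℝ) < 1 - q ^ (n + 1) := by
    have := pow_lt_one₀ hq0.le hq1 (by omega : n + 1 ≠ 0); linarith
  have h3 : qfac q n ≠ 0 := by have := one_le_qfac hq0 hq1 n; positivity
  have he : (n + 1) * ((n + 1) - 1) / 2 = n * (n - 1) / 2 + n := by simpa using tri n
  unfold qa
  rw [hf, he, pow_add]
  field_simp

lemma summable_qa {q : ℝ} (hq0 : 0 < q) (hq1 : q < 1) (x : ℝ) :
    Summable (fun n : ℕ => qa q n * x ^ n) := by
  apply summable_of_ratio_norm_eventually_le (r := 1/2) (by norm_num)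
  have h : Filter.Tendsto (fun n : ℕ => q ^ n * |x|) Filter.atTop (nhds 0) := by
    simpa using (tendsto_pow_atTop_nhds_zero_of_lt_one hq0.le hq1).mul_const |x|
  filter_upwards [h.eventually (eventually_le_nhds (by norm_num : (0:ℝ) < 1/2))] with n hn
  have h2 : (0:ℝ) < 1 - q ^ (n + 1) := by
    have := pow_lt_one₀ hq0.le hq1 (by omega : n + 1 ≠ 0); linarith
  have hA : qa q (n + 1) = qa q n * q ^ n * (1 - q) / (1 - q ^ (n + 1)) :=
    eq_div_of_mul_eq h2.ne' (qa_succ hq0 hq1 n)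
  have key : qa q (n + 1) * x ^ (n + 1) =
      (qa q n * x ^ n) * (q ^ n * (1 - q) / (1 - q ^ (n + 1)) * x) := by
    rw [hA, pow_succ]; ring
  rw [key, norm_mul, mul_comm (1/2 : ℝ)]
  apply mul_le_mul_of_nonneg_left _ (norm_nonneg _)
  have hfr : (1 - q) / (1 - q ^ (n + 1)) ≤ 1 := by
    rw [div_le_one h2]
    have h : q ^ (n + 1) ≤ q ^ 1 := pow_le_pow_of_le_one hq0.le hq1.le (by omega)
    rw [pow_one] at h; linarith
  have hfr0 : 0 ≤ (1 - q) / (1 - q ^ (n + 1)) := div_nonneg (by linarith) h2.le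
  have habs : ‖q ^ n * (1 - q) / (1 - q ^ (n + 1)) * x‖ =
      q ^ n * ((1 - q) / (1 - q ^ (n + 1))) * |x| := by
    rw [Real.norm_eq_abs, abs_mul, mul_div_assoc, abs_mul,
      abs_of_nonneg (pow_nonneg hq0.le n), abs_of_nonneg hfr0]
  rw [habs]
  have hq_n : (0:ℝ) ≤ q ^ n := pow_nonneg hq0.le n
  nlinarith [mul_le_mul_of_nonneg_left hfr hq_n, abs_nonneg x,
    mul_le_mul_of_nonneg_right (mul_le_mul_of_nonneg_left hfr hq_n) (abs_nonneg x)]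


lemma qS_funceq {q : ℝ} (hq0 : 0 < q) (hq1 : q < 1) (x : ℝ) :
    qS q x = (1 + (1 - q) * x) * qS q (q * x) := by
  have hsx := summable_qa hq0 hq1 x
  have hsq := summable_qa hq0 hq1 (q * x)
  set gg : ℕ → ℝ := fun n => qa q n * (1 - q ^ n) * x ^ n with hgg_def
  have hpt : ∀ n, qa q n * x ^ n = qa q n * (q * x) ^ n + gg n := by
    intro n; simp only [hgg_def, mul_pow]; ring
  have hgg_sum : Summable gg := by
    have he : gg = fun n => qa q n * x ^ n - qa q n * (q * x) ^ n := by
      funext n; simp only [hgg_def, mul_pow]; ring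
    rw [he]; exact hsx.sub hsq
  have h1 : qS q x = qS q (q * x) + ∑' n, gg n := by
    unfold qS
    rw [← Summable.tsum_add hsq hgg_sum]
    exact tsum_congr hpt
  have h2 : ∑' n, gg n = ((1 - q) * x) * qS q (q * x) := by
    rw [Summable.tsum_eq_zero_add hgg_sum]
    have hg0 : gg 0 = 0 := by simp [hgg_def]
    have hstep : ∀ n, gg (n + 1) = ((1 - q) * x) * (qa q n * (q * x) ^ n) := by
      intro n
      have hA := qa_succ hq0 hq1 n
      simp only [hgg_def]
      rw [show qa q (n + 1) * (1 - q ^ (n + 1)) * x ^ (n + 1) =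
          (qa q (n + 1) * (1 - q ^ (n + 1))) * x ^ (n + 1) by ring, hA]
      rw [mul_pow, pow_succ]; ring
    rw [hg0, zero_add]
    calc ∑' n, gg (n + 1) = ∑' n, ((1 - q) * x) * (qa q n * (q * x) ^ n) := tsum_congr hstep
      _ = ((1 - q) * x) * qS q (q * x) := tsum_mul_left
  rw [h1, h2]; ring

lemma qS_iter {q : ℝ} (hq0 : 0 < q) (hq1 : q < 1) (x : ℝ) (N : ℕ) :
    qS q x = (∏ j ∈ Finset.range N, (1 + q ^ j * (1 - q) * x)) * qS q (q ^ N * x) := by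
  induction N with
  | zero => simp
  | succ N ih =>
    rw [Finset.prod_range_succ, ih, qS_funceq hq0 hq1 (q ^ N * x),
      show q * (q ^ N * x) = q ^ (N + 1) * x by ring]
    ring

set_option maxHeartbeats 1000000 in
lemma qS_near_one {q : ℝ} (hq0 : 0 < q) (hq1 : q < 1) {y : ℝ} (hy : |y| ≤ 1/2) :
    |qS q y - 1| ≤ 2 * |y| := by
  have hs := summable_qa hq0 hq1 y
  have h0 : qa q 0 = 1 := by simp [qa, qfac]
  have h1 : qS q y = 1 + ∑' n, qa q (n + 1) * y ^ (n + 1) := by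
    unfold qS; rw [Summable.tsum_eq_zero_add hs]; simp [h0]
  rw [h1, add_sub_cancel_left]
  have hy1 : |y| < 1 := lt_of_le_of_lt hy (by norm_num)
  have hshift : Summable (fun n : ℕ => qa q (n + 1) * y ^ (n + 1)) :=
    (summable_nat_add_iff 1).mpr hs
  have hgeo : Summable (fun n : ℕ => |y| ^ (n + 1)) := by
    have he : (fun n : ℕ => |y| ^ (n + 1)) = fun n => |y| * |y| ^ n := by
      funext n; rw [pow_succ]; ring
    rw [he]; exact (summable_geometric_of_lt_one (abs_nonneg y) hy1).mul_left _
  have hb : ∀ n : ℕ, ‖qa q (n + 1) * y ^ (n + 1)‖ ≤ |y| ^ (n + 1) := by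
    intro n
    rw [Real.norm_eq_abs, abs_mul, abs_pow, abs_of_nonneg (qa_nonneg hq0 hq1 (n + 1))]
    have h2 := qa_le_one hq0 hq1 (n + 1)
    have h3 := qa_nonneg hq0 hq1 (n + 1)
    nlinarith [pow_nonneg (abs_nonneg y) (n + 1)]
  calc |∑' n, qa q (n + 1) * y ^ (n + 1)| ≤ ∑' n : ℕ, |y| ^ (n + 1) := by
        refine (norm_tsum_le_tsum_norm ?_).trans (Summable.tsum_le_tsum hb ?_ hgeo)
        · exact hshift.abs
        · exact hshift.abs
    _ = |y| * (1 - |y|)⁻¹ := by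
        rw [show (fun n : ℕ => |y| ^ (n + 1)) = fun n => |y| * |y| ^ n from
          funext fun n => by rw [pow_succ]; ring]
        rw [tsum_mul_left, tsum_geometric_of_lt_one (abs_nonneg y) hy1]
    _ ≤ 2 * |y| := by
        have hpos : (0:ℝ) < 1 - |y| := by linarith
        have hmi : (1 - |y|) * (1 - |y|)⁻¹ = 1 := mul_inv_cancel₀ hpos.ne'
        nlinarith [abs_nonneg y, inv_nonneg.mpr hpos.le]

lemma qS_tendsto_one {q : ℝ} (hq0 : 0 < q) (hq1 : q < 1) (x : ℝ) :
    Filter.Tendsto (fun N : ℕ => qS q (q ^ N * x)) Filter.atTop (nhds 1) := by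
  have hq : Filter.Tendsto (fun N : ℕ => q ^ N * |x|) Filter.atTop (nhds 0) := by
    simpa using (tendsto_pow_atTop_nhds_zero_of_lt_one hq0.le hq1).mul_const |x|
  have h2 : Filter.Tendsto (fun N : ℕ => 2 * (q ^ N * |x|)) Filter.atTop (nhds 0) := by
    simpa using hq.const_mul 2
  have hev : ∀ᶠ N in Filter.atTop, ‖qS q (q ^ N * x) - 1‖ ≤ 2 * (q ^ N * |x|) := by
    filter_upwards [hq.eventually (eventually_le_nhds (by norm_num : (0:ℝ) < 1/2))] with N hN
    have habs : |q ^ N * x| = q ^ N * |x| := by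
      rw [abs_mul, abs_of_nonneg (pow_nonneg hq0.le N)]
    have h3 := qS_near_one hq0 hq1 (y := q ^ N * x) (by rw [habs]; exact hN)
    rw [habs] at h3
    simpa [Real.norm_eq_abs] using h3
  have h4 := squeeze_zero_norm' hev h2
  have h5 := h4.add_const 1
  simpa using h5

lemma abs_log_one_add_le {t : ℝ} (ht : |t| ≤ 1/2) : |Real.log (1 + t)| ≤ 2 * |t| := by
  obtain ⟨h1, h2⟩ := abs_le.mp ht
  have hpos : (0:ℝ) < 1 + t := by linarith
  rw [abs_le]
  constructor
  · have hlog : Real.log (1 + t)⁻¹ ≤ (1 + t)⁻¹ - 1 :=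
      Real.log_le_sub_one_of_pos (inv_pos.mpr hpos)
    rw [Real.log_inv] at hlog
    have hmul : (1 + t) * (1 + t)⁻¹ = 1 := mul_inv_cancel₀ hpos.ne'
    nlinarith [abs_nonneg t, neg_abs_le t, le_abs_self t, inv_nonneg.mpr hpos.le]
  · have hlog : Real.log (1 + t) ≤ (1 + t) - 1 := Real.log_le_sub_one_of_pos hpos
    have := le_abs_self t
    linarith [abs_nonneg t]

lemma mult_qprod {q : ℝ} (hq0 : 0 < q) (hq1 : q < 1) (x : ℝ) :
    Multipliable (fun j : ℕ => 1 + q ^ j * (1 - q) * x) := by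
  obtain ⟨J, hJ⟩ : ∃ J : ℕ, ∀ j ≥ J, |q ^ j * (1 - q) * x| ≤ 1/2 := by
    have h : Filter.Tendsto (fun j : ℕ => |q ^ j * (1 - q) * x|) Filter.atTop (nhds 0) := by
      have := ((tendsto_pow_atTop_nhds_zero_of_lt_one hq0.le hq1).mul_const ((1 - q) * x)).abs
      simpa [mul_assoc] using this
    exact Filter.eventually_atTop.mp
      (h.eventually (eventually_le_nhds (by norm_num : (0:ℝ) < 1/2)))
  -- tail has a product
  have hc : ∀ j : ℕ, |q ^ (j + J) * (1 - q) * x| ≤ 1/2 := fun j => hJ (j + J) (by omega)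
  have hpos : ∀ j : ℕ, 0 < 1 + q ^ (j + J) * (1 - q) * x := by
    intro j; have := abs_le.mp (hc j); linarith [this.1]
  have hlog : Summable (fun j : ℕ => Real.log (1 + q ^ (j + J) * (1 - q) * x)) := by
    apply Summable.of_norm_bounded (g := fun j : ℕ => 2 * (q ^ J * (1 - q) * |x|) * q ^ j)
    · exact (summable_geometric_of_lt_one hq0.le hq1).mul_left _
    · intro j
      have h1 := abs_log_one_add_le (hc j)
      have h2 : |q ^ (j + J) * (1 - q) * x| = q ^ J * (1 - q) * |x| * q ^ j := by
        rw [abs_mul, abs_mul, abs_of_nonneg (pow_nonneg hq0.le _),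
          abs_of_nonneg (by linarith : (0:ℝ) ≤ 1 - q), pow_add]
        ring
      rw [Real.norm_eq_abs]
      rw [h2] at h1
      linarith
  have hT : HasProd (fun j : ℕ => 1 + q ^ (j + J) * (1 - q) * x)
      (Real.exp (∑' j : ℕ, Real.log (1 + q ^ (j + J) * (1 - q) * x))) := by
    have hP := hlog.hasSum.rexp
    have he : (Real.exp ∘ fun j : ℕ => Real.log (1 + q ^ (j + J) * (1 - q) * x))
        = fun j : ℕ => 1 + q ^ (j + J) * (1 - q) * x :=
      funext fun j => Real.exp_log (hpos j)
    rwa [he] at hP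
  -- head: finitely supported modification
  set F : ℕ → ℝ := fun j => 1 + q ^ j * (1 - q) * x with hF
  set h1f : ℕ → ℝ := fun n => if n < J then F n else 1 with hh1
  set h2f : ℕ → ℝ := fun n => if n < J then 1 else F n with hh2
  have hg1 : HasProd h1f (∏ n ∈ Finset.range J, h1f n) :=
    hasProd_prod_of_ne_finset_one (fun n hn => by
      have hJn : J ≤ n := by simpa using hn
      simp only [hh1, if_neg (Nat.not_lt.mpr hJn)])
  have hg2 : HasProd h2f (Real.exp (∑' j : ℕ, Real.log (1 + q ^ (j + J) * (1 - q) * x))) := by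
    have hinj : Function.Injective (fun n : ℕ => n + J) := fun a b h => by simp only [] at h; omega
    rw [← hinj.hasProd_iff (f := h2f)]
    · have : (h2f ∘ fun n : ℕ => n + J) = fun j : ℕ => 1 + q ^ (j + J) * (1 - q) * x := by
        funext j; simp only [Function.comp, hh2, hF, if_neg (by omega : ¬ j + J < J)]
      rwa [this]
    · intro n hn
      have : n < J := by
        by_contra hnot
        exact hn ⟨n - J, by simp only []; omega⟩
      simp only [hh2, if_pos this]
  have hFeq : (fun n : ℕ => h1f n * h2f n) = F := by
    funext n
    by_cases h : n < J <;> simp [hh1, hh2, h]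
  have := hg1.mul hg2
  rw [hFeq] at this
  exact this.multipliable

theorem stmt_9 (q x : ℝ) (hq0 : 0 < q) (hq1 : q < 1) :
    (∑' n : ℕ, q ^ (n * (n - 1) / 2) * x ^ n /
        ∏ k ∈ Finset.range n, ((1 - q ^ (k + 1)) / (1 - q))) =
      ∏' j : ℕ, (1 + q ^ j * (1 - q) * x) := by
  have hL : (∑' n : ℕ, q ^ (n * (n - 1) / 2) * x ^ n /
      ∏ k ∈ Finset.range n, ((1 - q ^ (k + 1)) / (1 - q))) = qS q x := by
    unfold qS qa qfac
    exact tsum_congr fun n => by rw [mul_div_right_comm]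
  rw [hL]
  have hM := mult_qprod hq0 hq1 x
  have hprod := hM.hasProd.tendsto_prod_nat
  have hS1 := qS_tendsto_one hq0 hq1 x
  have hconst : Filter.Tendsto
      (fun N : ℕ => (∏ j ∈ Finset.range N, (1 + q ^ j * (1 - q) * x)) * qS q (q ^ N * x))
      Filter.atTop (nhds ((∏' j : ℕ, (1 + q ^ j * (1 - q) * x)) * 1)) := hprod.mul hS1
  have heq : (fun N : ℕ => (∏ j ∈ Finset.range N, (1 + q ^ j * (1 - q) * x)) * qS q (q ^ N * x))
      = fun _ => qS q x := funext fun N => (qS_iter hq0 hq1 x N).symm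
  rw [heq] at hconst
  have hfin := tendsto_nhds_unique tendsto_const_nhds hconst
  simpa using hfin
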